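/- Let κ be a regular uncountable cardinal. If κ →^poly (κ)^2_{reg-bdd} holds, then every C-sequence on κ is trivial: for every sequence ⟨C_α : α ∈ lim(κ)⟩ with each C_α a club subset of α, there exists a club D ⊆ κ such that for every α < κ there exists β < κ with D ∩ α ⊆ C_β. -/

import Mathlib

open Ordinal Set Cardinal

/-- `C` is a club (closed unbounded) subset of the ordinal `o`. -/
def IsClubIn (C : Set Ordinal) (o : Ordinal) : Prop :=
  C ⊆ Set.Iio o ∧ (∀ α < o, ∃ β ∈ C, α < β) ∧
    (∀ α < o, Order.IsSuccLimit α → (∀ β < α, ∃ γ ∈ C, β < γ ∧ γ < α) → α ∈ C)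

/-- `S` is stationary in the ordinal `o`. -/
def IsStatIn (S : Set Ordinal) (o : Ordinal) : Prop :=
  ∀ C : Set Ordinal, IsClubIn C o → (S ∩ C).Nonempty

/-- `f` is a normal coloring of pairs below `o`: equal colors have equal maxima. -/
def IsNormal2 (f : Ordinal → Ordinal → Ordinal) (o : Ordinal) : Prop :=
  ∀ a b a' b', a < b → b < o → a' < b' → b' < o → f a b = f a' b' → b = b'

/-- `f` is regressively bounded on pairs below `κ.ord`. -/
def RegBdd (f : Ordinal → Ordinal → Ordinal) (κ : Cardinal) : Prop :=
  ∃ lam : Cardinal, lam < κ ∧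
    IsStatIn {α : Ordinal | lam ≤ α.cof} κ.ord ∧
    ∀ α < κ.ord, lam ≤ Ordinal.cof α →
      ∀ i : Ordinal, ∃ b < α, ∀ β < α, f β α = i → β < b

/-- `f` is injective on pairs from `A` ("A is rainbow for f"). -/
def RainbowOn (f : Ordinal → Ordinal → Ordinal) (A : Set Ordinal) : Prop :=
  ∀ a ∈ A, ∀ b ∈ A, ∀ a' ∈ A, ∀ b' ∈ A,
    a < b → a' < b' → f a b = f a' b' → a = a' ∧ b = b'

namespace RBaux

open Classical in
/-- The auxiliary "walk one step" function. -/
noncomputable def h (C : Ordinal → Set Ordinal) (β α : Ordinal) : Ordinal :=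
  if Order.IsSuccLimit α then sInf {γ | γ ∈ C α ∧ β < γ}
  else if hs : β + 1 < α ∧ ∃ γ, α = Order.succ γ then hs.2.choose else 0

/-- The coloring. -/
noncomputable def f (C : Ordinal → Set Ordinal) (β α : Ordinal) : Ordinal :=
  α * α + h C β α

theorem h_limit_mem (C : Ordinal → Set Ordinal) {β α : Ordinal} (hα : Order.IsSuccLimit α)
    (hclub : IsClubIn (C α) α) (hβ : β < α) : h C β α ∈ C α ∧ β < h C β α := by
  have hne : {γ | γ ∈ C α ∧ β < γ}.Nonempty := by
    obtain ⟨γ, hγ, hβγ⟩ := hclub.2.1 β hβ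
    exact ⟨γ, hγ, hβγ⟩
  have := csInf_mem hne
  unfold h
  rw [if_pos hα]
  exact this

theorem h_lt (C : Ordinal → Set Ordinal) {β α : Ordinal} (hβ : β < α)
    (hcl : Order.IsSuccLimit α → IsClubIn (C α) α) : h C β α < α := by
  by_cases hα : Order.IsSuccLimit α
  · exact (hcl hα).1 (h_limit_mem C hα (hcl hα) hβ).1
  · unfold h
    rw [if_neg hα]
    by_cases hs : β + 1 < α ∧ ∃ γ, α = Order.succ γ
    · rw [dif_pos hs]
      have := hs.2.choose_spec
      conv_rhs => rw [this]
      exact Order.lt_succ _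
    · rw [dif_neg hs]
      exact lt_of_le_of_lt (zero_le (a := β)) hβ

theorem h_succ (C : Ordinal → Set Ordinal) {β α : Ordinal} (hα : ¬ Order.IsSuccLimit α)
    (h1 : β + 1 < α) : Order.succ (h C β α) = α := by
  have hex : ∃ γ, α = Order.succ γ := by
    rcases Ordinal.zero_or_succ_or_isSuccLimit α with h0 | ⟨γ, hγ⟩ | hl
    · exact absurd h0 (by rintro rfl; exact absurd h1 (by simp [not_lt_zero]))
    · exact ⟨γ, hγ.symm⟩
    · exact absurd hl hα
  unfold h
  rw [if_neg hα, dif_pos ⟨h1, hex⟩]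
  exact (⟨h1, hex⟩ : β + 1 < α ∧ ∃ γ, α = Order.succ γ).2.choose_spec.symm

theorem sq_add_lt {α α' x x' : Ordinal} (hx : x < α) (hαα' : α < α') :
    α * α + x < α' * α' + x' := by
  calc α * α + x < α * α + α := (add_lt_add_iff_left _).2 hx
    _ = α * Order.succ α := (mul_succ α α).symm
    _ ≤ α * α' := mul_le_mul_right (Order.succ_le_of_lt hαα') α
    _ ≤ α' * α' := mul_le_mul_left hαα'.le α'
    _ ≤ α' * α' + x' := le_self_add

theorem sq_add_inj {α α' x x' : Ordinal} (hx : x < α) (hx' : x' < α')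
    (heq : α * α + x = α' * α' + x') : α = α' ∧ x = x' := by
  rcases lt_trichotomy α α' with hlt | rfl | hgt
  · exact absurd heq (sq_add_lt hx hlt).ne
  · exact ⟨rfl, by rwa [add_right_inj] at heq⟩
  · exact absurd heq.symm (sq_add_lt hx' hgt).ne

/-- Closure-point construction: from an unbounded subset of `κ.ord` (of uncountable
cofinality) we can find, above any `x`, a limit ordinal in which the set is cofinal. -/
theorem exists_limit_pt {κ : Cardinal.{0}} (hreg : κ.IsRegular) (hunc : ℵ₀ < κ)
    {S : Set Ordinal} (hS : ∀ x < κ.ord, ∃ a ∈ S, x < a ∧ a < κ.ord)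
    {x : Ordinal} (hx : x < κ.ord) :
    ∃ β, x < β ∧ β < κ.ord ∧ Order.IsSuccLimit β ∧ ∀ y < β, ∃ a ∈ S, y < a ∧ a < β := by
  have step : ∀ y : Ordinal, ∃ a : Ordinal, y < κ.ord → (a ∈ S ∧ y < a ∧ a < κ.ord) := by
    intro y
    by_cases hy : y < κ.ord
    · obtain ⟨a, ha⟩ := hS y hy
      exact ⟨a, fun _ => ⟨ha.1, ha.2.1, ha.2.2⟩⟩
    · exact ⟨0, fun h => absurd h hy⟩
  choose F hF using step
  set g : ℕ → Ordinal := fun n => F^[n + 1] x with hg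
  have hgsucc : ∀ n, g (n + 1) = F (g n) := by
    intro n
    simp only [hg, Function.iterate_succ_apply']
  have hg0 : g 0 = F x := by simp [hg]
  have key : ∀ n, g n ∈ S ∧ g n < κ.ord := by
    intro n
    induction n with
    | zero => rw [hg0]; exact ⟨(hF x hx).1, (hF x hx).2.2⟩
    | succ n ih =>
      rw [hgsucc]
      exact ⟨(hF _ ih.2).1, (hF _ ih.2).2.2⟩
  have hmono : ∀ n, g n < g (n + 1) := by
    intro n
    rw [hgsucc]
    exact (hF _ (key n).2).2.1
  set β := ⨆ n, g n with hβ
  have hgle : ∀ n, g n ≤ β := fun n => Ordinal.le_iSup g n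
  have hβκ : β < κ.ord := by
    apply Cardinal.iSup_lt_ord_of_isRegular hreg
    · rw [Cardinal.mk_nat]; exact hunc
    · exact fun n => (key n).2
  have hxβ : x < β := lt_of_lt_of_le (by rw [hg0]; exact (hF x hx).2.1) (hgle 0)
  have hcof : ∀ y < β, ∃ a ∈ S, y < a ∧ a < β := by
    intro y hy
    obtain ⟨n, hn⟩ := Ordinal.lt_iSup_iff.mp hy
    exact ⟨g n, (key n).1, hn, lt_of_lt_of_le (hmono n) (hgle (n + 1))⟩
  refine ⟨β, hxβ, hβκ, Ordinal.isSuccLimit_iff.2 ⟨?_, ?_⟩, hcof⟩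
  · exact (lt_of_le_of_lt (zero_le (a := x)) hxβ).ne'
  · refine Order.isSuccPrelimit_of_succ_lt fun a ha => ?_
    obtain ⟨b, _, hab, hbβ⟩ := hcof a ha
    rw [← Ordinal.add_one_eq_succ]
    rw [Ordinal.add_one_eq_succ] at *
    exact lt_of_le_of_lt (Order.succ_le_of_lt hab) hbβ

end RBaux

/-- If `κ` is regular uncountable and `κ →^poly (κ)²_{reg-bdd}` holds, then every
C-sequence on `κ` is trivial. -/
theorem poly_regbdd_implies_trivial_Csequence (κ : Cardinal.{0})
    (hreg : κ.IsRegular) (hunc : ℵ₀ < κ)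
    (hpoly : ∀ f : Ordinal → Ordinal → Ordinal, IsNormal2 f κ.ord → RegBdd f κ →
      ∃ A : Set Ordinal, A ⊆ Set.Iio κ.ord ∧ #A = Cardinal.lift.{1} κ ∧ RainbowOn f A)
    (C : Ordinal → Set Ordinal)
    (hC : ∀ α < κ.ord, Order.IsSuccLimit α → IsClubIn (C α) α) :
    ∃ D : Set Ordinal, IsClubIn D κ.ord ∧
      ∀ α < κ.ord, ∃ β, β < κ.ord ∧ Order.IsSuccLimit β ∧ D ∩ Set.Iio α ⊆ C β := by
  have hordlim : Order.IsSuccLimit κ.ord := Cardinal.isSuccLimit_ord hreg.aleph0_le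
  -- the coloring (lifted to the color universe of `hpoly`)
  have hlt : ∀ {β α : Ordinal}, β < α → α < κ.ord → RBaux.h C β α < α := by
    intro β α hβ hα
    exact RBaux.h_lt C hβ (fun hl => hC α hα hl)
  -- normality
  have hnorm : IsNormal2 (fun β α => (RBaux.f C β α).lift) κ.ord := by
    intro a b a' b' hab hb ha'b' hb' heq
    rw [Ordinal.lift_inj] at heq
    exact (RBaux.sq_add_inj (hlt hab hb) (hlt ha'b' hb') heq).1
  -- regressive boundedness
  have hregbdd : RegBdd (fun β α => (RBaux.f C β α).lift) κ := by
    refine ⟨ℵ₀, hunc, ?_, ?_⟩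
    · intro E hE
      have hEunb : ∀ x < κ.ord, ∃ a ∈ E, x < a ∧ a < κ.ord := by
        intro x hx
        obtain ⟨a, haE, hxa⟩ := hE.2.1 x hx
        exact ⟨a, haE, hxa, hE.1 haE⟩
      obtain ⟨β, _, hβκ, hβlim, hβcof⟩ := RBaux.exists_limit_pt hreg hunc hEunb
        hordlim.pos
      exact ⟨β, Ordinal.aleph0_le_cof.2 hβlim, hE.2.2 β hβκ hβlim hβcof⟩
    · intro α hα hcof i
      have hαlim : Order.IsSuccLimit α := Ordinal.aleph0_le_cof.1 hcof
      by_cases hex : ∃ β < α, (RBaux.f C β α).lift = i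
      · obtain ⟨β₀, hβ₀, hfβ₀⟩ := hex
        refine ⟨RBaux.h C β₀ α + 1, ?_, ?_⟩
        · rw [Ordinal.add_one_eq_succ]
          exact hαlim.succ_lt (hlt hβ₀ hα)
        · intro β hβ hfβ
          have heq : RBaux.h C β α = RBaux.h C β₀ α := by
            have h' : (RBaux.f C β α).lift = (RBaux.f C β₀ α).lift := hfβ.trans hfβ₀.symm
            rw [Ordinal.lift_inj] at h'
            exact (RBaux.sq_add_inj (hlt hβ hα) (hlt hβ₀ hα) h').2
          have hmem := RBaux.h_limit_mem C hαlim (hC α hα hαlim) hβ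
          rw [heq] at hmem
          exact lt_of_lt_of_le hmem.2 (le_of_lt (lt_add_one _))
      · refine ⟨0, hαlim.pos, ?_⟩
        intro β hβ hfβ
        exact absurd ⟨β, hβ, hfβ⟩ hex
  -- get the rainbow set
  obtain ⟨A, hAsub, hAcard, hArain⟩ := hpoly (fun β α => (RBaux.f C β α).lift) hnorm hregbdd
  -- A is unbounded in κ.ord
  have hAunb : ∀ x < κ.ord, ∃ a ∈ A, x < a ∧ a < κ.ord := by
    intro x hx
    by_contra hcon
    push_neg at hcon
    have hsub : A ⊆ Set.Iio (Order.succ x) := by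
      intro a ha
      rw [Set.mem_Iio, Order.lt_succ_iff]
      by_contra hax
      push_neg at hax
      exact absurd (hcon a ha hax) (not_le.mpr (hAsub ha))
    have hle : #A ≤ #(Set.Iio (Order.succ x)) := Cardinal.mk_le_mk_of_subset hsub
    rw [hAcard, Ordinal.mk_Iio_ordinal] at hle
    have hcard : (Order.succ x).card < κ := by
      rw [← Cardinal.lt_ord]
      exact hordlim.succ_lt hx
    exact absurd (Cardinal.lift_le.mp hle) (not_le.mpr hcard)
  -- D is the set of limit points of A
  set D : Set Ordinal :=
    {β : Ordinal | β < κ.ord ∧ Order.IsSuccLimit β ∧ ∀ y < β, ∃ a ∈ A, y < a ∧ a < β} with hD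
  have hDclub : IsClubIn D κ.ord := by
    refine ⟨fun β hβ => hβ.1, ?_, ?_⟩
    · intro x hx
      obtain ⟨β, hxβ, hβκ, hβlim, hβcof⟩ := RBaux.exists_limit_pt hreg hunc hAunb hx
      exact ⟨β, ⟨hβκ, hβlim, hβcof⟩, hxβ⟩
    · intro α hα hαlim hcl
      refine ⟨hα, hαlim, ?_⟩
      intro y hy
      obtain ⟨γ, hγD, hyγ, hγα⟩ := hcl y hy
      obtain ⟨a, haA, hya, haγ⟩ := hγD.2.2 y hyγ
      exact ⟨a, haA, hya, haγ.trans hγα⟩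
  -- main claim: limit points of A below a limit element of A lie in its club
  have claim : ∀ α ∈ A, Order.IsSuccLimit α → ∀ β ∈ D, β < α → β ∈ C α := by
    intro α hαA hαlim β hβD hβα
    have hακ : α < κ.ord := hAsub hαA
    have hclub := hC α hακ hαlim
    by_contra hβC
    have hnc : ¬ ∀ y < β, ∃ γ ∈ C α, y < γ ∧ γ < β := fun hh =>
      hβC (hclub.2.2 β hβα hβD.2.1 hh)
    push_neg at hnc
    obtain ⟨s, hsβ, hs⟩ := hnc
    obtain ⟨β₁, hβ₁A, hsβ₁, hβ₁β⟩ := hβD.2.2 s hsβ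
    obtain ⟨β₂, hβ₂A, hβ₁β₂, hβ₂β⟩ := hβD.2.2 β₁ hβ₁β
    have hset : {γ | γ ∈ C α ∧ β₁ < γ} = {γ | γ ∈ C α ∧ β₂ < γ} := by
      ext γ
      constructor
      · rintro ⟨hγC, hβ₁γ⟩
        refine ⟨hγC, ?_⟩
        have hnγ : β ≤ γ := hs γ hγC (hsβ₁.trans hβ₁γ)
        exact lt_of_lt_of_le hβ₂β hnγ
      · rintro ⟨hγC, hβ₂γ⟩
        exact ⟨hγC, hβ₁β₂.trans hβ₂γ⟩
    have hfeq : (RBaux.f C β₁ α).lift = (RBaux.f C β₂ α).lift := by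
      congr 1
      unfold RBaux.f RBaux.h
      rw [if_pos hαlim, if_pos hαlim, hset]
    have := hArain β₁ hβ₁A α hαA β₂ hβ₂A α hαA (hβ₁β.trans hβα) (hβ₂β.trans hβα) hfeq
    exact absurd this.1 hβ₁β₂.ne
  -- conclusion
  refine ⟨D, hDclub, ?_⟩
  intro α hα
  -- find a limit element of A above α
  have hexlim : ∃ β ∈ A, α ≤ β ∧ Order.IsSuccLimit β := by
    by_contra hno
    push_neg at hno
    obtain ⟨a, haA, _, haκ⟩ := hAunb 0 hordlim.pos
    obtain ⟨a', ha'A, haa', ha'κ⟩ := hAunb a haκ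
    have hxκ : max (a' + 1) α < κ.ord := max_lt (hordlim.succ_lt ha'κ) hα
    obtain ⟨c, hcA, hxc, hcκ⟩ := hAunb (max (a' + 1) α) hxκ
    have hαc : α ≤ c := le_of_lt (lt_of_le_of_lt (le_max_right _ _) hxc)
    have hclim : ¬ Order.IsSuccLimit c := hno c hcA hαc
    have ha'c : a' + 1 < c := lt_of_le_of_lt (le_max_left _ _) hxc
    have hac : a + 1 < c := lt_of_le_of_lt (add_le_add_left haa'.le 1) ha'c
    have h1 := RBaux.h_succ C hclim hac
    have h2 := RBaux.h_succ C hclim ha'c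
    have hheq : RBaux.h C a c = RBaux.h C a' c := Order.succ_injective (h1.trans h2.symm)
    have hfeq : (RBaux.f C a c).lift = (RBaux.f C a' c).lift := by
      congr 1
      unfold RBaux.f
      rw [hheq]
    have haclt : a < c := haa'.trans (lt_of_le_of_lt (le_self_add) ha'c)
    have ha'clt : a' < c := lt_of_le_of_lt le_self_add ha'c
    exact absurd (hArain a haA c hcA a' ha'A c hcA haclt ha'clt hfeq).1 haa'.ne
  obtain ⟨β, hβA, hαβ, hβlim⟩ := hexlim
  refine ⟨β, hAsub hβA, hβlim, ?_⟩
  rintro d ⟨hdD, hdα⟩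
  exact claim β hβA hβlim d hdD (lt_of_lt_of_le hdα hαβ)
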